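/- arXiv:1507.05490 — 3 statements merged into one kernel-verified Lean document; each statement's English description precedes it below -/
import Mathlib

section
/- Let p be a probability mass function on D_{m−i+1} = {−2^{m−i},…,2^{m−i}} that is symmetric: p(−k) = p(k) for all k. Define q(j) = ∑_{x+y ≡ j mod (2^m+1), x,y ∈ D_{m−i+1}} p(x)p(y) for j ∈ D_{m−i}. Then q is symmetric, q(−j) = q(j), and for 0 ≤ j ≤ 2^{m−i−1}, q(j) = ∑_{k=0}^{j} p(k)p(j−k) + 2∑_{k=j+1}^{2^{m−i}} p(k)p(k−j). -/
open MeasureTheory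

/-- `Dm k = {-2^(k-1), …, 2^(k-1)}`, the symmetric set of representatives of
`ℤ/(2^k+1)ℤ` (for `k ≥ 1`). -/
noncomputable def Dm (k : ℕ) : Finset ℤ := Finset.Icc (-(2 ^ (k - 1) : ℤ)) (2 ^ (k - 1))

lemma Dm_nonempty (k : ℕ) : (Dm k).Nonempty :=
  ⟨0, Finset.mem_Icc.mpr ⟨neg_nonpos.mpr (by positivity), by positivity⟩⟩

/-- Wagner's tree map `H_i` with modulus `M = 2^m+1`; `none` is the failure state `Δ`.
At each level the two halves are combined, surviving only if the sum modulo `M`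
has a representative in `D_{m-i}`. -/
noncomputable def wagner (m : ℕ) : (i : ℕ) → (Fin (2 ^ i) → ℤ) → Option ℤ
  | 0, x => some (x 0)
  | (i + 1), x =>
    match wagner m i (fun k => x ⟨k.1,
          lt_of_lt_of_le k.2 (Nat.pow_le_pow_right (by norm_num) (Nat.le_succ i))⟩),
        wagner m i (fun k => x ⟨2 ^ i + k.1, by
          have hk := k.2; have h2 : (2:ℕ) ^ (i+1) = 2 ^ i + 2 ^ i := by ring
          omega⟩) with
    | some a, some b =>
        if h : ∃ c ∈ Dm (m - (i + 1)), a + b ≡ c [ZMOD ((2 : ℤ) ^ m + 1)] then some h.choose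
        else none
    | _, _ => none

/-- the sample space of vectors of length `2^i` with entries in `Dm m`. -/
noncomputable def vecSpace (m i : ℕ) : Finset (Fin (2 ^ i) → ℤ) :=
  Fintype.piFinset fun _ => Dm m

lemma vecSpace_nonempty (m i : ℕ) : (vecSpace m i).Nonempty :=
  ⟨fun _ => 0, by
    simp only [vecSpace, Fintype.mem_piFinset]
    intro _
    simp only [Dm, Finset.mem_Icc]
    exact ⟨neg_nonpos.mpr (by positivity), by positivity⟩⟩

/-- `p_{i,m}(j) = P(H_i(x) = j)` for `x` with i.i.d. entries uniform on `Dm m`. -/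
noncomputable def pim (m i : ℕ) (j : ℤ) : ℝ :=
  ((vecSpace m i).filter (fun x => wagner m i x = some j)).card / (vecSpace m i).card

/-- The convolution of a symmetric pmf on `D_{m-i+1}` modulo `2^m+1` is symmetric
and satisfies the key recursion. -/
theorem key_recursion_pmf (m i : ℕ) (hm : 2 ≤ m) (hi : 2 ≤ i) (him : i ≤ m - 1)
    (p : ℤ → ℝ) (hsupp : ∀ k : ℤ, k ∉ Dm (m - i + 1) → p k = 0)
    (hpos : ∀ k : ℤ, 0 ≤ p k) (hsum : ∑ k ∈ Dm (m - i + 1), p k = 1)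
    (hsymm : ∀ k : ℤ, p (-k) = p k) :
    let q : ℤ → ℝ := fun j =>
      ∑ x ∈ ((Dm (m - i + 1)) ×ˢ (Dm (m - i + 1))).filter
          (fun x => x.1 + x.2 ≡ j [ZMOD ((2:ℤ) ^ m + 1)]), p x.1 * p x.2
    (∀ j ∈ Dm (m - i), q (-j) = q j) ∧
      ∀ j : ℤ, 0 ≤ j → j ≤ 2 ^ (m - i - 1) →
        q j = (∑ k ∈ Finset.Icc (0:ℤ) j, p k * p (j - k)) +
          2 * ∑ k ∈ Finset.Icc (j + 1) ((2:ℤ) ^ (m - i)), p k * p (k - j) := by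
  intro q
  have hq : ∀ j : ℤ, q j =
      ∑ x ∈ ((Dm (m - i + 1)) ×ˢ (Dm (m - i + 1))).filter
          (fun x => x.1 + x.2 ≡ j [ZMOD ((2:ℤ) ^ m + 1)]), p x.1 * p x.2 := fun _ => rfl
  have hmi : 1 ≤ m - i := by omega
  set t : ℤ := 2 ^ (m - i - 1) with ht
  have htpos : (1:ℤ) ≤ t := by
    have : (0:ℤ) < t := by positivity
    omega
  have hN : (2:ℤ) ^ (m - i) = 2 * t := by
    rw [ht, ← pow_succ']
    congr 1
    omega
  have hMge : 8 * t + 1 ≤ (2:ℤ) ^ m + 1 := by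
    have h1 : (2:ℤ) ^ (m - i - 1 + 3) ≤ 2 ^ m :=
      pow_le_pow_right₀ (by norm_num) (by omega)
    have h8 : (2:ℤ) ^ (m - i - 1 + 3) = 8 * t := by rw [ht, pow_add]; ring
    linarith
  have hDeq : Dm (m - i + 1) = Finset.Icc (-(2 * t)) (2 * t) := by
    rw [Dm, show m - i + 1 - 1 = m - i from by omega, hN]
  have hmodeq : ∀ j x y : ℤ, |j| ≤ t → x ∈ Dm (m - i + 1) → y ∈ Dm (m - i + 1) →
      ((x + y) ≡ j [ZMOD ((2:ℤ) ^ m + 1)] ↔ x + y = j) := by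
    intro j x y hj hx hy
    rw [hDeq, Finset.mem_Icc] at hx hy
    rw [abs_le] at hj
    constructor
    · intro h
      have hd : ((2:ℤ) ^ m + 1) ∣ (j - (x + y)) := h.dvd
      have h0 : j - (x + y) = 0 :=
        Int.eq_zero_of_abs_lt_dvd hd (abs_lt.mpr ⟨by linarith, by linarith⟩)
      linarith
    · intro h
      rw [h]
  constructor
  · -- symmetry
    intro j _
    rw [hq, hq]
    refine Finset.sum_nbij' (fun z => (-z.1, -z.2)) (fun z => (-z.1, -z.2)) ?_ ?_ ?_ ?_ ?_
    · intro z hz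
      simp only [Finset.mem_filter, Finset.mem_product, hDeq, Finset.mem_Icc] at hz ⊢
      refine ⟨⟨by omega, by omega⟩, ?_⟩
      have := hz.2.neg
      simpa [neg_add, add_comm] using this
    · intro z hz
      simp only [Finset.mem_filter, Finset.mem_product, hDeq, Finset.mem_Icc] at hz ⊢
      refine ⟨⟨by omega, by omega⟩, ?_⟩
      have := hz.2.neg
      simpa [neg_add, add_comm] using this
    · intro z _; simp
    · intro z _; simp
    · intro z _; simp [hsymm]
  · -- recursion
    intro j hj0 hjt
    rw [hq, hN]
    have habs : |j| ≤ t := abs_le.mpr ⟨by linarith, hjt⟩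
    have hfilt : ((Dm (m - i + 1)) ×ˢ (Dm (m - i + 1))).filter
          (fun x => x.1 + x.2 ≡ j [ZMOD ((2:ℤ) ^ m + 1)])
        = ((Dm (m - i + 1)) ×ˢ (Dm (m - i + 1))).filter (fun x => x.1 + x.2 = j) := by
      refine Finset.filter_congr ?_
      intro z hz
      rw [Finset.mem_product] at hz
      exact hmodeq j z.1 z.2 habs hz.1 hz.2
    rw [hfilt]
    have hconv : ∑ z ∈ ((Dm (m - i + 1)) ×ˢ (Dm (m - i + 1))).filter
          (fun x => x.1 + x.2 = j), p z.1 * p z.2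
        = ∑ x ∈ Finset.Icc (j - 2 * t) (2 * t), p x * p (j - x) := by
      refine Finset.sum_nbij' (fun z => z.1) (fun x => (x, j - x)) ?_ ?_ ?_ ?_ ?_
      · intro z hz
        simp only [Finset.mem_filter, Finset.mem_product, hDeq, Finset.mem_Icc] at hz ⊢
        omega
      · intro x hx
        simp only [Finset.mem_filter, Finset.mem_product, hDeq, Finset.mem_Icc] at hx ⊢
        refine ⟨⟨⟨by omega, by omega⟩, by omega, by omega⟩, by ring⟩
      · intro z hz
        simp only [Finset.mem_filter, Finset.mem_product] at hz
        have h2 : j - z.1 = z.2 := by omega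
        show (z.1, j - z.1) = z
        rw [h2]
      · intro x _; rfl
      · intro z hz
        simp only [Finset.mem_filter, Finset.mem_product] at hz
        have h2 : j - z.1 = z.2 := by omega
        show p z.1 * p z.2 = p z.1 * p (j - z.1)
        rw [h2]
    rw [hconv]
    have hsplit : Finset.Icc (j - 2 * t) (2 * t)
        = (Finset.Icc (j - 2 * t) (-1) ∪ Finset.Icc 0 j) ∪ Finset.Icc (j + 1) (2 * t) := by
      ext x
      simp only [Finset.mem_union, Finset.mem_Icc]
      omega
    have hd1 : Disjoint (Finset.Icc (j - 2 * t) (-1)) (Finset.Icc (0:ℤ) j) := by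
      rw [Finset.disjoint_left]
      intro a ha hb
      simp only [Finset.mem_Icc] at ha hb
      omega
    have hd2 : Disjoint (Finset.Icc (j - 2 * t) (-1) ∪ Finset.Icc 0 j)
        (Finset.Icc (j + 1) (2 * t)) := by
      rw [Finset.disjoint_left]
      intro a ha hb
      simp only [Finset.mem_union, Finset.mem_Icc] at ha hb
      omega
    rw [hsplit, Finset.sum_union hd2, Finset.sum_union hd1]
    have hneg : ∑ x ∈ Finset.Icc (j - 2 * t) (-1), p x * p (j - x)
        = ∑ k ∈ Finset.Icc (j + 1) (2 * t), p k * p (k - j) := by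
      refine Finset.sum_nbij' (fun x => j - x) (fun k => j - k) ?_ ?_ ?_ ?_ ?_
      · intro x hx
        simp only [Finset.mem_Icc] at hx ⊢
        omega
      · intro k hk
        simp only [Finset.mem_Icc] at hk ⊢
        omega
      · intro x _; ring
      · intro k _; ring
      · intro x _
        rw [show j - x - j = -x by ring, hsymm, mul_comm]
    have hpos2 : ∑ x ∈ Finset.Icc (j + 1) (2 * t), p x * p (j - x)
        = ∑ k ∈ Finset.Icc (j + 1) (2 * t), p k * p (k - j) := by
      refine Finset.sum_congr rfl ?_
      intro x _
      rw [show j - x = -(x - j) by ring, hsymm]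
    rw [hneg, hpos2]
    ring
end

section
/- With H_i and p_{i,m} as defined above, p_{1,m}(j) = 1/(2^m+1) for every j ∈ D_{m−1}, and for 2 ≤ i ≤ m−1 and 0 ≤ j ≤ 2^{m−i−1}, p_{i,m}(j) = ∑_{k=0}^{j} p_{i−1,m}(k) p_{i−1,m}(j−k) + 2 ∑_{k=j+1}^{2^{m−i}} p_{i−1,m}(k) p_{i−1,m}(k−j). -/
open MeasureTheory

def lhf (i : ℕ) (x : Fin (2^(i+1)) → ℤ) : Fin (2^i) → ℤ :=
  fun k => x ⟨k.1, lt_of_lt_of_le k.2 (Nat.pow_le_pow_right (by norm_num) (Nat.le_succ i))⟩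

def rhf (i : ℕ) (x : Fin (2^(i+1)) → ℤ) : Fin (2^i) → ℤ :=
  fun k => x ⟨2 ^ i + k.1, by
    have hk := k.2; have h2 : (2:ℕ) ^ (i+1) = 2 ^ i + 2 ^ i := by ring
    omega⟩

noncomputable def combine (m i : ℕ) : Option ℤ → Option ℤ → Option ℤ
  | some a, some b =>
      if h : ∃ c ∈ Dm (m - (i + 1)), a + b ≡ c [ZMOD ((2 : ℤ) ^ m + 1)] then some h.choose
      else none
  | _, _ => none

lemma wagner_succ_eq (m i : ℕ) (x : Fin (2^(i+1)) → ℤ) :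
    wagner m (i+1) x = combine m i (wagner m i (lhf i x)) (wagner m i (rhf i x)) := rfl

section Aux
variable {m : ℕ}

lemma mem_Dm {k : ℕ} {a : ℤ} : a ∈ Dm k ↔ -(2^(k-1) : ℤ) ≤ a ∧ a ≤ 2^(k-1) := Finset.mem_Icc

lemma neg_mem_Dm {k : ℕ} {a : ℤ} (h : a ∈ Dm k) : -a ∈ Dm k := by
  rw [mem_Dm] at h ⊢; omega

lemma pow_sub_le {k : ℕ} (hk : k ≤ m) : (2:ℤ)^(k-1) ≤ 2^(m-1) :=
  pow_le_pow_right₀ (by norm_num) (by omega)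

lemma two_pow_pred {m : ℕ} (hm : 1 ≤ m) : (2:ℤ)^(m-1) + 2^(m-1) = 2^m := by
  rw [← two_mul, ← pow_succ']
  congr 1; omega

lemma Dm_unique (hm : 2 ≤ m) {k : ℕ} (hk : k ≤ m) {c c' : ℤ} (hc : c ∈ Dm k) (hc' : c' ∈ Dm k)
    (h : c ≡ c' [ZMOD ((2:ℤ)^m + 1)]) : c = c' := by
  have hd : ((2:ℤ)^m + 1) ∣ (c' - c) := Int.ModEq.dvd h
  rw [mem_Dm] at hc hc'
  have hb : (2:ℤ)^(k-1) ≤ 2^(m-1) := pow_sub_le hk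
  have h2 : (2:ℤ)^(m-1) + 2^(m-1) = 2^m := two_pow_pred (by omega)
  by_contra hne
  have hpos : (0:ℤ) < |c' - c| := abs_pos.mpr (sub_ne_zero.mpr fun e => hne e.symm)
  have hle := Int.le_of_dvd hpos (((dvd_abs _ _).mpr hd))
  have : |c' - c| ≤ 2^m := by rw [abs_le]; omega
  omega

lemma dite_choose (hm : 2 ≤ m) {k : ℕ} (hk : k ≤ m) (s j : ℤ) :
    (if h : ∃ c ∈ Dm k, s ≡ c [ZMOD ((2:ℤ)^m + 1)] then some h.choose else none) = some j
      ↔ j ∈ Dm k ∧ s ≡ j [ZMOD ((2:ℤ)^m + 1)] := by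
  constructor
  · intro h
    split at h
    · next hex =>
      obtain ⟨hc1, hc2⟩ := hex.choose_spec
      obtain rfl := Option.some.inj h
      exact ⟨hc1, hc2⟩
    · exact absurd h (by simp)
  · rintro ⟨hj, hs⟩
    have hex : ∃ c ∈ Dm k, s ≡ c [ZMOD ((2:ℤ)^m + 1)] := ⟨j, hj, hs⟩
    rw [dif_pos hex]
    obtain ⟨hc1, hc2⟩ := hex.choose_spec
    exact congrArg some (Dm_unique hm hk hc1 hj (hc2.symm.trans hs))

end Aux

section Aux2
variable {m : ℕ}

def glue (i : ℕ) (y z : Fin (2^i) → ℤ) : Fin (2^(i+1)) → ℤ := fun k =>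
  if h : k.1 < 2^i then y ⟨k.1, h⟩ else z ⟨k.1 - 2^i, by
    have hk := k.2; have h2 : (2:ℕ)^(i+1) = 2^i + 2^i := by ring
    omega⟩

lemma lhf_glue (i : ℕ) (y z : Fin (2^i) → ℤ) : lhf i (glue i y z) = y := by
  funext k
  simp only [lhf, glue, k.2, dif_pos]

lemma rhf_glue (i : ℕ) (y z : Fin (2^i) → ℤ) : rhf i (glue i y z) = z := by
  funext k
  have h1 : ¬ (2^i + k.1 < 2^i) := by omega
  simp only [rhf, glue, h1, dif_neg, not_false_iff]
  congr 1
  exact Fin.ext (by simp)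

lemma glue_eq (i : ℕ) (x : Fin (2^(i+1)) → ℤ) : glue i (lhf i x) (rhf i x) = x := by
  funext k
  by_cases h : k.1 < 2^i
  · simp only [glue, h, dif_pos, lhf]
  · simp only [glue, h, dif_neg, not_false_iff, rhf]
    exact congrArg x (Fin.ext (by simp; omega))

lemma mem_vecSpace {i : ℕ} {x : Fin (2^i) → ℤ} :
    x ∈ vecSpace m i ↔ ∀ k, x k ∈ Dm m := by
  simp [vecSpace, Fintype.mem_piFinset]

lemma lhf_mem {i : ℕ} {x : Fin (2^(i+1)) → ℤ} (h : x ∈ vecSpace m (i+1)) :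
    lhf i x ∈ vecSpace m i := by
  rw [mem_vecSpace] at h ⊢; intro k; exact h _

lemma rhf_mem {i : ℕ} {x : Fin (2^(i+1)) → ℤ} (h : x ∈ vecSpace m (i+1)) :
    rhf i x ∈ vecSpace m i := by
  rw [mem_vecSpace] at h ⊢; intro k; exact h _

lemma glue_mem {i : ℕ} {y z : Fin (2^i) → ℤ} (hy : y ∈ vecSpace m i) (hz : z ∈ vecSpace m i) :
    glue i y z ∈ vecSpace m (i+1) := by
  rw [mem_vecSpace] at hy hz ⊢
  intro k
  unfold glue
  split
  · exact hy _
  · exact hz _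

lemma glue_inj {i : ℕ} {x x' : Fin (2^(i+1)) → ℤ} (hL : lhf i x = lhf i x')
    (hR : rhf i x = rhf i x') : x = x' := by
  rw [← glue_eq i x, ← glue_eq i x', hL, hR]

lemma combine_some_some (m i : ℕ) (a b : ℤ) :
    combine m i (some a) (some b) =
      if h : ∃ c ∈ Dm (m - (i + 1)), a + b ≡ c [ZMOD ((2:ℤ)^m + 1)] then some h.choose
      else none := rfl

lemma combine_none_left (m i : ℕ) (o : Option ℤ) : combine m i none o = none := by
  cases o <;> rfl

lemma combine_none_right (m i : ℕ) (o : Option ℤ) : combine m i o none = none := by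
  cases o <;> rfl

/-- the support lemma -/
lemma wagner_mem_of_eq_some {i : ℕ} {x : Fin (2^(i+1)) → ℤ} {j : ℤ}
    (h : wagner m (i+1) x = some j) : j ∈ Dm (m - (i+1)) := by
  rw [wagner_succ_eq] at h
  cases hL : wagner m i (lhf i x) with
  | none => rw [hL, combine_none_left] at h; exact absurd h (by simp)
  | some a =>
    cases hR : wagner m i (rhf i x) with
    | none => rw [hL, hR, combine_none_right] at h; exact absurd h (by simp)
    | some b =>
      rw [hL, hR, combine_some_some] at h
      split at h
      · next hex =>
        obtain rfl := Option.some.inj h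
        exact hex.choose_spec.1
      · exact absurd h (by simp)

end Aux2

section Aux3
variable {m : ℕ}

lemma modeq_eq (hm : 2 ≤ m) {i : ℕ} (hi : 1 ≤ i) (hi2 : i + 1 ≤ m - 1) {a b j : ℤ}
    (ha : a ∈ Dm (m - i)) (hb : b ∈ Dm (m - i)) (hj : j ∈ Dm (m - (i+1)))
    (h : a + b ≡ j [ZMOD ((2:ℤ)^m + 1)]) : a + b = j := by
  have hd : ((2:ℤ)^m + 1) ∣ (j - (a + b)) := Int.ModEq.dvd h
  rw [mem_Dm] at ha hb hj
  have hA : (2:ℤ)^(m - i - 1) ≤ 2^(m-2) := pow_le_pow_right₀ (by norm_num) (by omega)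
  have hB : (2:ℤ)^(m - (i+1) - 1) ≤ 2^(m-2) := pow_le_pow_right₀ (by norm_num) (by omega)
  have h4 : (2:ℤ)^(m-2) * 4 = 2^m := by
    rw [show (4:ℤ) = 2^2 by norm_num, ← pow_add]
    congr 1; omega
  by_contra hne
  have hpos : (0:ℤ) < |j - (a + b)| := abs_pos.mpr (sub_ne_zero.mpr fun e => hne e.symm)
  have hle := Int.le_of_dvd hpos ((dvd_abs _ _).mpr hd)
  have : |j - (a + b)| ≤ 2^(m-2) * 3 := by rw [abs_le]; omega
  omega

lemma exists_rep_neg_iff {k : ℕ} (s : ℤ) :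
    (∃ c ∈ Dm k, -s ≡ c [ZMOD ((2:ℤ)^m + 1)]) ↔ (∃ c ∈ Dm k, s ≡ c [ZMOD ((2:ℤ)^m + 1)]) := by
  constructor <;> rintro ⟨c, hc, hcc⟩ <;>
    exact ⟨-c, neg_mem_Dm hc, by have := hcc.neg; simpa using this⟩

lemma wagner_neg (hm : 2 ≤ m) : ∀ (i : ℕ) (x : Fin (2^i) → ℤ),
    wagner m i (fun k => -(x k)) = Option.map (fun a => -a) (wagner m i x)
  | 0, _ => rfl
  | (i+1), x => by
    have hL : lhf i (fun k => -(x k)) = fun k => -(lhf i x k) := rfl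
    have hR : rhf i (fun k => -(x k)) = fun k => -(rhf i x k) := rfl
    rw [wagner_succ_eq, wagner_succ_eq, hL, hR, wagner_neg hm i (lhf i x),
      wagner_neg hm i (rhf i x)]
    cases hA : wagner m i (lhf i x) with
    | none => simp [combine_none_left]
    | some a =>
      cases hB : wagner m i (rhf i x) with
      | none => simp [combine_none_right]
      | some b =>
        simp only [Option.map_some]
        rw [combine_some_some, combine_some_some]
        by_cases hex : ∃ c ∈ Dm (m - (i+1)), a + b ≡ c [ZMOD ((2:ℤ)^m + 1)]
        · have hex' : ∃ c ∈ Dm (m - (i+1)), -a + -b ≡ c [ZMOD ((2:ℤ)^m + 1)] := by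
            rw [show -a + -b = -(a+b) by ring, exists_rep_neg_iff]; exact hex
          rw [dif_pos hex, dif_pos hex', Option.map_some]
          have h1 := hex'.choose_spec
          have h2 := hex.choose_spec
          refine congrArg some (Dm_unique hm (Nat.sub_le m (i+1)) h1.1 (neg_mem_Dm h2.1) ?_)
          refine h1.2.symm.trans ?_
          rw [show -a + -b = -(a+b) by ring]
          exact h2.2.neg
        · have hex' : ¬ ∃ c ∈ Dm (m - (i+1)), -a + -b ≡ c [ZMOD ((2:ℤ)^m + 1)] := by
            rw [show -a + -b = -(a+b) by ring, exists_rep_neg_iff]; exact hex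
          rw [dif_neg hex, dif_neg hex', Option.map_none]

lemma pim_neg (hm : 2 ≤ m) (i : ℕ) (j : ℤ) : pim m i (-j) = pim m i j := by
  unfold pim
  congr 2
  refine Finset.card_nbij' (fun x => fun k => -(x k)) (fun x => fun k => -(x k)) ?_ ?_ ?_ ?_
  · intro x hx
    rw [Finset.mem_coe, Finset.mem_filter] at hx ⊢
    obtain ⟨hx1, hx2⟩ := hx
    refine ⟨?_, ?_⟩
    · rw [mem_vecSpace] at hx1 ⊢; exact fun k => neg_mem_Dm (hx1 k)
    · rw [wagner_neg hm i x, hx2]; simp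
  · intro x hx
    rw [Finset.mem_coe, Finset.mem_filter] at hx ⊢
    obtain ⟨hx1, hx2⟩ := hx
    refine ⟨?_, ?_⟩
    · rw [mem_vecSpace] at hx1 ⊢; exact fun k => neg_mem_Dm (hx1 k)
    · rw [wagner_neg hm i x, hx2]; simp
  · intro x _; funext k; simp
  · intro x _; funext k; simp

lemma pim_eq_zero (hm : 2 ≤ m) {i : ℕ} (hi : 1 ≤ i) {j : ℤ} (hj : j ∉ Dm (m - i)) :
    pim m i j = 0 := by
  unfold pim
  obtain ⟨i', rfl⟩ : ∃ i', i = i' + 1 := ⟨i - 1, by omega⟩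
  have : (vecSpace m (i'+1)).filter (fun x => wagner m (i'+1) x = some j) = ∅ := by
    rw [Finset.filter_eq_empty_iff]
    intro x _ hx
    exact hj (wagner_mem_of_eq_some hx)
  rw [this]
  simp

lemma card_Dm (hm : 1 ≤ m) : (Dm m).card = 2^m + 1 := by
  unfold Dm
  rw [Int.card_Icc]
  have h2 : (2:ℤ)^(m-1) + 2^(m-1) = 2^m := two_pow_pred hm
  have : ((2:ℤ)^(m-1) + 1 - -(2^(m-1))) = ((2^m + 1 : ℕ) : ℤ) := by push_cast; omega
  rw [this, Int.toNat_natCast]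

lemma card_vecSpace (hm : 1 ≤ m) (i : ℕ) : (vecSpace m i).card = (2^m + 1)^(2^i) := by
  unfold vecSpace
  rw [Fintype.card_piFinset]
  simp [card_Dm hm]

end Aux3

section Aux4
variable {m : ℕ}

def repM (m : ℕ) (t : ℤ) : ℤ := (t + 2^(m-1)) % (2^m + 1) - 2^(m-1)

lemma repM_mem (hm : 1 ≤ m) (t : ℤ) : repM m t ∈ Dm m := by
  have h0 : (0:ℤ) < 2^m + 1 := by positivity
  have h1 := Int.emod_nonneg (t + 2^(m-1)) (ne_of_gt h0)
  have h2 := Int.emod_lt_of_pos (t + 2^(m-1)) h0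
  have h3 := two_pow_pred hm
  rw [mem_Dm]; unfold repM; omega

lemma repM_modeq (t : ℤ) : repM m t ≡ t [ZMOD ((2:ℤ)^m + 1)] := by
  have h1 : (t + 2^(m-1)) % ((2:ℤ)^m + 1) ≡ t + 2^(m-1) [ZMOD ((2:ℤ)^m + 1)] :=
    Int.emod_emod_of_dvd _ dvd_rfl
  have h2 := h1.sub_right ((2:ℤ)^(m-1))
  simpa [repM] using h2

def f0 : Fin (2^1) := ⟨0, by norm_num⟩
def f1 : Fin (2^1) := ⟨1, by norm_num⟩

lemma wagner_one (hm : 2 ≤ m) (x : Fin (2^1) → ℤ) (j : ℤ) :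
    wagner m 1 x = some j ↔ j ∈ Dm (m-1) ∧ x f0 + x f1 ≡ j [ZMOD ((2:ℤ)^m + 1)] := by
  have hL : wagner m 0 (lhf 0 x) = some (x f0) :=
    congrArg some (congrArg x (Fin.ext (by decide)))
  have hR : wagner m 0 (rhf 0 x) = some (x f1) :=
    congrArg some (congrArg x (Fin.ext (by decide)))
  have h : wagner m 1 x = (if hc : ∃ c ∈ Dm (m - (0+1)), x f0 + x f1 ≡ c [ZMOD ((2:ℤ)^m + 1)]
      then some hc.choose else none) := by
    have h0 := wagner_succ_eq m 0 x
    rw [hL, hR, combine_some_some] at h0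
    exact h0
  rw [h]
  exact dite_choose hm (Nat.sub_le m (0+1)) _ j

lemma count_one (hm : 2 ≤ m) {j : ℤ} (hj : j ∈ Dm (m-1)) :
    ((vecSpace m 1).filter (fun x => wagner m 1 x = some j)).card = 2^m + 1 := by
  rw [← card_Dm (by omega : 1 ≤ m)]
  refine Finset.card_nbij' (fun x => x f0)
      (fun a => fun t => if (t:ℕ) = 0 then a else repM m (j - a)) ?_ ?_ ?_ ?_
  · intro x hx
    rw [Finset.mem_coe, Finset.mem_filter] at hx
    exact (mem_vecSpace.mp hx.1) f0
  · intro a ha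
    rw [Finset.mem_coe, Finset.mem_filter]
    constructor
    · rw [mem_vecSpace]; intro k
      dsimp only
      split
      · exact ha
      · exact repM_mem (by omega) _
    · rw [wagner_one hm]
      refine ⟨hj, ?_⟩
      have e0 : ((f0 : Fin (2^1)) : ℕ) = 0 := rfl
      have e1 : ((f1 : Fin (2^1)) : ℕ) = 1 := rfl
      simp only [e0, e1, if_pos, if_neg, one_ne_zero, reduceIte]
      have h5 := (repM_modeq (m := m) (j - a)).add_left a
      have h6 : a + (j - a) = j := by ring
      rw [h6] at h5
      exact h5
  · intro x hx
    rw [Finset.mem_coe, Finset.mem_filter] at hx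
    obtain ⟨hx1, hx2⟩ := hx
    rw [wagner_one hm] at hx2
    funext t
    by_cases ht : (t : ℕ) = 0
    · have : t = f0 := Fin.ext ht
      rw [this]; exact if_pos rfl
    · have h21 : (2:ℕ)^1 = 2 := by norm_num
      have ht1 : t = f1 := Fin.ext (by
        show (t:ℕ) = 1
        have h2 : (t:ℕ) < 2 := by simpa using t.2
        omega)
      rw [ht1]
      show (if ((f1 : Fin (2^1)) : ℕ) = 0 then x f0 else repM m (j - x f0)) = x f1
      rw [if_neg (by decide)]
      refine Dm_unique hm le_rfl (repM_mem (by omega) _) (mem_vecSpace.mp hx1 f1) ?_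
      refine (repM_modeq _).trans ?_
      have h5 := (hx2.2.symm).sub_right (x f0)
      have h6 : x f0 + x f1 - x f0 = x f1 := by ring
      rw [h6] at h5
      exact h5
  · intro a _
    exact if_pos rfl

lemma count_succ (hm : 2 ≤ m) {i : ℕ} (hi : 1 ≤ i) (hi2 : i + 1 ≤ m - 1) {j : ℤ}
    (hj : j ∈ Dm (m - (i+1))) :
    ((vecSpace m (i+1)).filter (fun x => wagner m (i+1) x = some j)).card
      = ∑ a ∈ Dm (m - i), ((vecSpace m i).filter (fun x => wagner m i x = some a)).card *
          ((vecSpace m i).filter (fun x => wagner m i x = some (j - a))).card := by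
  obtain ⟨l, rfl⟩ : ∃ l, i = l + 1 := ⟨i - 1, by omega⟩
  have hdisj : ∀ a ∈ Dm (m - (l+1)), ∀ b ∈ Dm (m - (l+1)), a ≠ b →
      Disjoint (((vecSpace m (l+1)).filter (fun x => wagner m (l+1) x = some a)) ×ˢ
          ((vecSpace m (l+1)).filter (fun x => wagner m (l+1) x = some (j - a))))
        (((vecSpace m (l+1)).filter (fun x => wagner m (l+1) x = some b)) ×ˢ
          ((vecSpace m (l+1)).filter (fun x => wagner m (l+1) x = some (j - b)))) := by
    intro a _ b _ hab
    rw [Finset.disjoint_left]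
    rintro ⟨y, z⟩ hy hz
    rw [Finset.mem_product, Finset.mem_filter, Finset.mem_filter] at hy hz
    exact hab (Option.some.inj (hy.1.2.symm.trans hz.1.2))
  refine Eq.trans ?_ ((Finset.card_biUnion hdisj).trans
    (Finset.sum_congr rfl fun a _ => Finset.card_product _ _))
  · refine Finset.card_nbij' (fun x => (lhf (l+1) x, rhf (l+1) x))
      (fun p => glue (l+1) p.1 p.2) ?_ ?_ ?_ ?_
    · intro x hx
      rw [Finset.mem_coe, Finset.mem_filter] at hx
      obtain ⟨hx1, hx2⟩ := hx
      rw [wagner_succ_eq] at hx2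
      cases hL : wagner m (l+1) (lhf (l+1) x) with
      | none => rw [hL, combine_none_left] at hx2; exact absurd hx2 (by simp)
      | some a =>
        cases hR : wagner m (l+1) (rhf (l+1) x) with
        | none => rw [hL, hR, combine_none_right] at hx2; exact absurd hx2 (by simp)
        | some b =>
          rw [hL, hR, combine_some_some,
            dite_choose hm (Nat.sub_le m (l+1+1))] at hx2
          have ha : a ∈ Dm (m - (l+1)) := wagner_mem_of_eq_some hL
          have hb : b ∈ Dm (m - (l+1)) := wagner_mem_of_eq_some hR
          have hab : a + b = j := modeq_eq hm hi hi2 ha hb hj hx2.2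
          rw [Finset.mem_coe, Finset.mem_biUnion]
          refine ⟨a, ha, ?_⟩
          rw [Finset.mem_product]
          constructor
          · rw [Finset.mem_filter]; exact ⟨lhf_mem hx1, hL⟩
          · rw [Finset.mem_filter]
            refine ⟨rhf_mem hx1, ?_⟩
            rw [hR]; congr 1; omega
    · rintro ⟨y, z⟩ hp
      rw [Finset.mem_coe, Finset.mem_biUnion] at hp
      obtain ⟨a, ha, hp⟩ := hp
      rw [Finset.mem_product, Finset.mem_filter, Finset.mem_filter] at hp
      obtain ⟨⟨hy1, hy2⟩, hz1, hz2⟩ := hp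
      rw [Finset.mem_coe, Finset.mem_filter]
      refine ⟨glue_mem hy1 hz1, ?_⟩
      rw [wagner_succ_eq, lhf_glue, rhf_glue, hy2, hz2, combine_some_some,
        dite_choose hm (Nat.sub_le m (l+1+1))]
      refine ⟨hj, ?_⟩
      rw [show a + (j - a) = j by ring]
    · intro x _
      exact glue_eq (l+1) x
    · rintro ⟨y, z⟩ _
      show (lhf (l+1) (glue (l+1) y z), rhf (l+1) (glue (l+1) y z)) = (y, z)
      rw [lhf_glue, rhf_glue]

lemma pim_eq (hm : 1 ≤ m) (i : ℕ) (j : ℤ) :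
    pim m i j = (((vecSpace m i).filter (fun x => wagner m i x = some j)).card : ℝ) /
      ((2:ℝ)^m + 1)^(2^i) := by
  unfold pim
  rw [card_vecSpace hm]
  push_cast
  ring

lemma pim_succ (hm : 2 ≤ m) {i : ℕ} (hi : 1 ≤ i) (hi2 : i + 1 ≤ m - 1) {j : ℤ}
    (hj : j ∈ Dm (m - (i+1))) :
    pim m (i+1) j = ∑ a ∈ Dm (m - i), pim m i a * pim m i (j - a) := by
  have hK : ((2:ℝ)^m + 1) ≠ 0 := by positivity
  have hK' : ((2:ℝ)^m + 1)^(2^i) ≠ 0 := by positivity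
  rw [pim_eq (by omega), count_succ hm hi hi2 hj]
  have hpow : ((2:ℝ)^m + 1)^(2^(i+1)) = ((2:ℝ)^m + 1)^(2^i) * ((2:ℝ)^m + 1)^(2^i) := by
    rw [← pow_add]; congr 1; ring
  push_cast
  rw [hpow, Finset.sum_div]
  refine Finset.sum_congr rfl fun a _ => ?_
  rw [pim_eq (by omega), pim_eq (by omega)]
  field_simp

end Aux4

/-- `p_{1,m}(j) = 1/(2^m+1)` on `D_{m-1}`, and the key recursion for `p_{i,m}`. -/
theorem pim_recursion (m : ℕ) (hm : 2 ≤ m) :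
    (∀ j ∈ Dm (m - 1), pim m 1 j = 1 / ((2:ℝ) ^ m + 1)) ∧
      ∀ i : ℕ, 2 ≤ i → i ≤ m - 1 → ∀ j : ℤ, 0 ≤ j → j ≤ 2 ^ (m - i - 1) →
        pim m i j = (∑ k ∈ Finset.Icc (0:ℤ) j, pim m (i-1) k * pim m (i-1) (j - k)) +
          2 * ∑ k ∈ Finset.Icc (j+1) ((2:ℤ) ^ (m - i)), pim m (i-1) k * pim m (i-1) (k - j) := by
  constructor
  · intro j hj
    rw [pim_eq (by omega : 1 ≤ m), count_one hm hj]
    have h1 : ((2:ℝ)^m + 1) ≠ 0 := by positivity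
    have h2 : (2:ℕ)^1 = 2 := by norm_num
    rw [h2]
    push_cast
    rw [sq]
    field_simp
  · intro i hi2 him j hj0 hjle
    obtain ⟨l, rfl⟩ : ∃ l, i = l + 1 := ⟨i - 1, by omega⟩
    simp only [Nat.add_sub_cancel]
    have hl1 : 1 ≤ l := by omega
    have hjD : j ∈ Dm (m - (l + 1)) :=
      mem_Dm.mpr ⟨le_trans (neg_nonpos.mpr (by positivity)) hj0, hjle⟩
    have hDm : Dm (m - l) = Finset.Icc (-((2:ℤ)^(m - (l+1)))) ((2:ℤ)^(m - (l+1))) := by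
      unfold Dm; rw [Nat.sub_sub]
    rw [pim_succ hm hl1 (by omega) hjD, hDm]
    have hjA : j ≤ (2:ℤ)^(m - (l+1)) :=
      hjle.trans (pow_le_pow_right₀ (by norm_num) (Nat.sub_le _ _))
    have hzero : ∀ t : ℤ, (2:ℤ)^(m - (l+1)) < t → pim m l t = 0 := by
      intro t ht
      refine pim_eq_zero hm hl1 ?_
      rw [mem_Dm, Nat.sub_sub]
      intro h
      linarith [h.2]
    have hA0 : (0:ℤ) < 2^(m - (l+1)) := by positivity
    generalize hA : (2:ℤ)^(m - (l+1)) = A at hjA hzero hA0 ⊢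
    have hsplit : Finset.Icc (-A) A = (Finset.Icc (-A) (-1) ∪ Finset.Icc 0 j) ∪
        Finset.Icc (j+1) A := by
      ext a; simp only [Finset.mem_Icc, Finset.mem_union]; omega
    have hd1 : Disjoint (Finset.Icc (-A) (-1)) (Finset.Icc (0:ℤ) j) := by
      rw [Finset.disjoint_left]; intro a ha hb
      rw [Finset.mem_Icc] at ha hb; omega
    have hd2 : Disjoint (Finset.Icc (-A) (-1) ∪ Finset.Icc 0 j) (Finset.Icc (j+1) A) := by
      rw [Finset.disjoint_left]; intro a ha hb
      rw [Finset.mem_union, Finset.mem_Icc, Finset.mem_Icc] at ha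
      rw [Finset.mem_Icc] at hb; omega
    rw [hsplit, Finset.sum_union hd2, Finset.sum_union hd1]
    have hneg : ∑ a ∈ Finset.Icc (-A) (-1), pim m l a * pim m l (j - a)
        = ∑ t ∈ Finset.Icc (j+1) (j+A), pim m l t * pim m l (t - j) := by
      refine Finset.sum_nbij' (fun a => j - a) (fun t => j - t) ?_ ?_ ?_ ?_ ?_
      · intro a ha; rw [Finset.mem_Icc] at ha; simp only [Finset.mem_Icc]; omega
      · intro t ht; rw [Finset.mem_Icc] at ht; simp only [Finset.mem_Icc]; omega
      · intro a _; ring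
      · intro t _; ring
      · intro a _
        rw [mul_comm]
        congr 1
        rw [show (j - a) - j = -a by ring]
        exact (pim_neg hm l a).symm
    have hshrink : ∑ t ∈ Finset.Icc (j+1) (j+A), pim m l t * pim m l (t - j)
        = ∑ t ∈ Finset.Icc (j+1) A, pim m l t * pim m l (t - j) := by
      symm
      apply Finset.sum_subset
      · exact Finset.Icc_subset_Icc le_rfl (by omega)
      · intro t ht hnt
        rw [Finset.mem_Icc] at ht
        simp only [Finset.mem_Icc, not_and, not_le] at hnt
        rw [hzero t (hnt ht.1), zero_mul]
    have hlast : ∑ a ∈ Finset.Icc (j+1) A, pim m l a * pim m l (j - a)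
        = ∑ a ∈ Finset.Icc (j+1) A, pim m l a * pim m l (a - j) :=
      Finset.sum_congr rfl fun a _ => by
        congr 1
        rw [show j - a = -(a - j) by ring]
        exact pim_neg hm l _
    rw [hneg, hshrink, hlast]
    ring
end

section
/- Each φ_n defined by the integral recursion φ_1 ≡ 1, φ_n(x) = ∫_0^x φ_{n−1}(u)φ_{n−1}(x−u) du + 2∫_x^{2^{−n}} φ_{n−1}(u)φ_{n−1}(u−x) du, is a nonnegative continuous (indeed polynomial) function on [0, 2^{−n}], and is monotonically non-increasing on [0, 2^{−n}] for every n ≥ 1. -/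
/-- The polynomials `φ_n`: `φ_1 ≡ 1` and
`φ_n(x) = ∫_0^x φ_{n-1}(u)φ_{n-1}(x-u) du + 2∫_x^{2^{-n}} φ_{n-1}(u)φ_{n-1}(u-x) du`. -/
noncomputable def phi : ℕ → ℝ → ℝ
  | 0, _ => 1
  | 1, _ => 1
  | (n + 2), x =>
      (∫ u in (0:ℝ)..x, phi (n + 1) u * phi (n + 1) (x - u)) +
        2 * ∫ u in x..((2:ℝ) ^ (-(n + 2 : ℤ))), phi (n + 1) u * phi (n + 1) (u - x)


open Polynomial

namespace PhiAux

noncomputable def cderiv (t : Polynomial (Polynomial ℝ)) : Polynomial (Polynomial ℝ) :=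
  t.sum fun i a => Polynomial.monomial i (Polynomial.derivative a)

noncomputable def pint (t : Polynomial (Polynomial ℝ)) : Polynomial (Polynomial ℝ) :=
  t.sum fun i a => Polynomial.monomial (i + 1) ((((i : ℝ) + 1)⁻¹) • a)

noncomputable def ev2 (t : Polynomial (Polynomial ℝ)) (x u : ℝ) : ℝ :=
  (t.map (Polynomial.evalRingHom x)).eval u

lemma cderiv_add (t s : Polynomial (Polynomial ℝ)) :
    cderiv (t + s) = cderiv t + cderiv s := by
  unfold cderiv
  apply Polynomial.sum_add_index <;> simp [map_add]

lemma cderiv_monomial (n : ℕ) (a : Polynomial ℝ) :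
    cderiv (Polynomial.monomial n a) = Polynomial.monomial n (Polynomial.derivative a) := by
  unfold cderiv
  apply Polynomial.sum_monomial_index
  simp

lemma derivative_pint (t : Polynomial (Polynomial ℝ)) :
    Polynomial.derivative (pint t) = t := by
  unfold pint
  rw [Polynomial.sum_def, map_sum]
  have : ∀ i ∈ t.support,
      Polynomial.derivative (Polynomial.monomial (i + 1) ((((i : ℝ) + 1)⁻¹) • t.coeff i))
        = Polynomial.monomial i (t.coeff i) := by
    intro i _
    rw [Polynomial.derivative_monomial]
    have h1 : ((i : ℝ) + 1) ≠ 0 := by positivity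
    have h2 : ((((i : ℝ) + 1)⁻¹) • t.coeff i) * ((i + 1 : ℕ) : ℝ[X]) = t.coeff i := by
      have h3 : (((i + 1 : ℕ)) : ℝ[X]) = Polynomial.C ((i : ℝ) + 1) := by
        push_cast
        simp
      rw [smul_mul_assoc, Polynomial.smul_eq_C_mul, mul_comm (t.coeff i), ← mul_assoc, h3,
        ← Polynomial.C_mul, inv_mul_cancel₀ h1, Polynomial.C_1, one_mul]
    rw [h2, Nat.add_sub_cancel]
  rw [Finset.sum_congr rfl this]
  exact Polynomial.sum_monomial_eq t

lemma derivative_cderiv (t : Polynomial (Polynomial ℝ)) :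
    Polynomial.derivative (cderiv t) = cderiv (Polynomial.derivative t) := by
  induction t using Polynomial.induction_on' with
  | add p q hp hq => rw [cderiv_add, map_add, hp, hq, map_add, cderiv_add]
  | monomial n a =>
      rw [cderiv_monomial, Polynomial.derivative_monomial, Polynomial.derivative_monomial,
        cderiv_monomial]
      congr 1
      rw [Polynomial.derivative_mul]
      simp

lemma ev2_add (t s : Polynomial (Polynomial ℝ)) (x u : ℝ) :
    ev2 (t + s) x u = ev2 t x u + ev2 s x u := by
  simp [ev2, Polynomial.map_add]

lemma ev2_monomial (n : ℕ) (a : Polynomial ℝ) (x u : ℝ) :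
    ev2 (Polynomial.monomial n a) x u = a.eval x * u ^ n := by
  simp [ev2, Polynomial.map_monomial, Polynomial.eval_monomial]

lemma ev2_diag (t : Polynomial (Polynomial ℝ)) (x : ℝ) :
    ev2 t x x = (t.eval (Polynomial.X : Polynomial ℝ)).eval x := by
  induction t using Polynomial.induction_on' with
  | add p q hp hq => simp [ev2_add, hp, hq]
  | monomial n a => simp [ev2_monomial]

lemma ev2_const (t : Polynomial (Polynomial ℝ)) (x r : ℝ) :
    ev2 t x r = (t.eval (Polynomial.C r)).eval x := by
  induction t using Polynomial.induction_on' with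
  | add p q hp hq => simp [ev2_add, hp, hq]
  | monomial n a => simp [ev2_monomial]

lemma hasDerivAt_ev2_left (t : Polynomial (Polynomial ℝ)) (b x : ℝ) :
    HasDerivAt (fun y => ev2 t y b) (ev2 (cderiv t) x b) x := by
  induction t using Polynomial.induction_on' with
  | add p q hp hq =>
      have := hp.add hq
      simp only [ev2_add, cderiv_add] at *
      exact this
  | monomial n a =>
      simp only [ev2_monomial, cderiv_monomial]
      exact (Polynomial.hasDerivAt a x).mul_const _

lemma hasDerivAt_ev2_diag (t : Polynomial (Polynomial ℝ)) (x : ℝ) :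
    HasDerivAt (fun y => ev2 t y y)
      (ev2 (Polynomial.derivative t) x x + ev2 (cderiv t) x x) x := by
  induction t using Polynomial.induction_on' with
  | add p q hp hq =>
      have := hp.add hq
      simp only [ev2_add, cderiv_add, map_add] at *
      refine this.congr_deriv ?_
      ring
  | monomial n a =>
      simp only [ev2_monomial, cderiv_monomial, Polynomial.derivative_monomial, ev2_monomial]
      have := (Polynomial.hasDerivAt a x).mul (hasDerivAt_pow n x)
      refine this.congr_deriv ?_
      simp [Polynomial.eval_mul]
      ring

lemma continuous_ev2_right (t : Polynomial (Polynomial ℝ)) (x : ℝ) :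
    Continuous (fun u => ev2 t x u) := by
  unfold ev2
  exact Polynomial.continuous _

lemma ftc_ev2 (t : Polynomial (Polynomial ℝ)) (x a b : ℝ) :
    ∫ u in a..b, ev2 (Polynomial.derivative t) x u = ev2 t x b - ev2 t x a := by
  apply intervalIntegral.integral_eq_sub_of_hasDerivAt
  · intro u _
    have h := Polynomial.hasDerivAt (t.map (Polynomial.evalRingHom x)) u
    rw [Polynomial.derivative_map] at h
    exact h
  · exact (continuous_ev2_right _ x).intervalIntegrable a b

end PhiAux

namespace PhiAux

noncomputable def S1 (P : Polynomial ℝ) : Polynomial (Polynomial ℝ) :=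
  (P.map Polynomial.C) *
    ((P.map Polynomial.C).comp (Polynomial.C Polynomial.X - Polynomial.X))

noncomputable def S2 (P : Polynomial ℝ) : Polynomial (Polynomial ℝ) :=
  (P.map Polynomial.C) *
    ((P.map Polynomial.C).comp (Polynomial.X - Polynomial.C Polynomial.X))

lemma map_evalRingHom_mapC (P : Polynomial ℝ) (x : ℝ) :
    (P.map Polynomial.C).map (Polynomial.evalRingHom x) = P := by
  rw [Polynomial.map_map]
  have : (Polynomial.evalRingHom x).comp (Polynomial.C : ℝ →+* Polynomial ℝ)
      = RingHom.id ℝ := by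
    ext r
    simp
  rw [this, Polynomial.map_id]

lemma ev2_S1 (P : Polynomial ℝ) (x u : ℝ) :
    ev2 (S1 P) x u = P.eval u * P.eval (x - u) := by
  unfold ev2 S1
  rw [Polynomial.map_mul, Polynomial.map_comp, map_evalRingHom_mapC, Polynomial.eval_mul,
    Polynomial.eval_comp]
  congr 2
  simp

lemma ev2_S2 (P : Polynomial ℝ) (x u : ℝ) :
    ev2 (S2 P) x u = P.eval u * P.eval (u - x) := by
  unfold ev2 S2
  rw [Polynomial.map_mul, Polynomial.map_comp, map_evalRingHom_mapC, Polynomial.eval_mul,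
    Polynomial.eval_comp]
  congr 2
  simp

lemma ev2_cderiv_S1 (P : Polynomial ℝ) (x u : ℝ) :
    ev2 (cderiv (S1 P)) x u = P.eval u * (Polynomial.derivative P).eval (x - u) := by
  have h1 : HasDerivAt (fun y => ev2 (S1 P) y u) (ev2 (cderiv (S1 P)) x u) x :=
    hasDerivAt_ev2_left _ u x
  have h2 : HasDerivAt (fun y => P.eval u * P.eval (y - u))
      (P.eval u * (Polynomial.derivative P).eval (x - u)) x := by
    have hy : HasDerivAt (fun y : ℝ => P.eval (y - u))
        ((Polynomial.derivative P).eval (x - u)) x := by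
      have := (Polynomial.hasDerivAt P (x - u)).comp x ((hasDerivAt_id x).sub_const u)
      simpa [Function.comp_def] using this
    simpa using hy.const_mul (P.eval u)
  have h3 : (fun y => ev2 (S1 P) y u) = fun y => P.eval u * P.eval (y - u) := by
    funext y; exact ev2_S1 P y u
  rw [h3] at h1
  exact h1.unique h2

lemma ev2_cderiv_S2 (P : Polynomial ℝ) (x u : ℝ) :
    ev2 (cderiv (S2 P)) x u = -(P.eval u * (Polynomial.derivative P).eval (u - x)) := by
  have h1 : HasDerivAt (fun y => ev2 (S2 P) y u) (ev2 (cderiv (S2 P)) x u) x :=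
    hasDerivAt_ev2_left _ u x
  have h2 : HasDerivAt (fun y => P.eval u * P.eval (u - y))
      (-(P.eval u * (Polynomial.derivative P).eval (u - x))) x := by
    have hy : HasDerivAt (fun y : ℝ => P.eval (u - y))
        (-(Polynomial.derivative P).eval (u - x)) x := by
      have hinner : HasDerivAt (fun y : ℝ => u - y) (-1 : ℝ) x := by
        simpa using ((hasDerivAt_id x).const_sub u)
      have := (Polynomial.hasDerivAt P (u - x)).comp x hinner
      simpa [Function.comp_def] using this
    have := hy.const_mul (P.eval u)
    simpa [mul_comm, mul_left_comm, mul_assoc] using this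
  have h3 : (fun y => ev2 (S2 P) y u) = fun y => P.eval u * P.eval (u - y) := by
    funext y; exact ev2_S2 P y u
  rw [h3] at h1
  exact h1.unique h2

end PhiAux

namespace PhiAux

noncomputable def gfun (P : Polynomial ℝ) (c : ℝ) (x : ℝ) : ℝ :=
  (∫ u in (0:ℝ)..x, P.eval u * P.eval (x - u)) +
    2 * ∫ u in x..c, P.eval u * P.eval (u - x)

lemma integral_S1 (P : Polynomial ℝ) (x a b : ℝ) :
    ∫ u in a..b, P.eval u * P.eval (x - u)
      = ev2 (pint (S1 P)) x b - ev2 (pint (S1 P)) x a := by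
  rw [← ftc_ev2, derivative_pint]
  simp only [ev2_S1]

lemma integral_S2 (P : Polynomial ℝ) (x a b : ℝ) :
    ∫ u in a..b, P.eval u * P.eval (u - x)
      = ev2 (pint (S2 P)) x b - ev2 (pint (S2 P)) x a := by
  rw [← ftc_ev2, derivative_pint]
  simp only [ev2_S2]

lemma gfun_eq (P : Polynomial ℝ) (c x : ℝ) :
    gfun P c x = (ev2 (pint (S1 P)) x x - ev2 (pint (S1 P)) x 0) +
      2 * (ev2 (pint (S2 P)) x c - ev2 (pint (S2 P)) x x) := by
  unfold gfun
  rw [integral_S1, integral_S2]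

lemma gfun_poly (P : Polynomial ℝ) (c : ℝ) :
    ∃ Q : Polynomial ℝ, ∀ x, gfun P c x = Q.eval x := by
  refine ⟨((pint (S1 P)).eval (Polynomial.X : Polynomial ℝ)
      - (pint (S1 P)).eval (Polynomial.C (0:ℝ)))
      + Polynomial.C 2 * ((pint (S2 P)).eval (Polynomial.C c)
      - (pint (S2 P)).eval (Polynomial.X : Polynomial ℝ)), fun x => ?_⟩
  rw [gfun_eq, ev2_diag, ev2_const, ev2_const, ev2_diag]
  simp

lemma gfun_hasDerivAt (P : Polynomial ℝ) (c x : ℝ) :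
    HasDerivAt (gfun P c)
      (-(P.eval x * P.eval 0) +
        (∫ u in (0:ℝ)..x, P.eval u * (Polynomial.derivative P).eval (x - u)) -
        2 * ∫ u in x..c, P.eval u * (Polynomial.derivative P).eval (u - x)) x := by
  have hfe : gfun P c = fun y =>
      (ev2 (pint (S1 P)) y y - ev2 (pint (S1 P)) y 0) +
        2 * (ev2 (pint (S2 P)) y c - ev2 (pint (S2 P)) y y) := by
    funext y; exact gfun_eq P c y
  rw [hfe]
  have h1 := (hasDerivAt_ev2_diag (pint (S1 P)) x).sub (hasDerivAt_ev2_left (pint (S1 P)) 0 x)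
  have h2 := ((hasDerivAt_ev2_left (pint (S2 P)) c x).sub
      (hasDerivAt_ev2_diag (pint (S2 P)) x)).const_mul (2:ℝ)
  have h := h1.add h2
  refine h.congr_deriv ?_
  -- now prove the value equality
  rw [derivative_pint, derivative_pint]
  have e1 : ev2 (S1 P) x x = P.eval x * P.eval 0 := by
    rw [ev2_S1]; simp
  have e2 : ev2 (S2 P) x x = P.eval x * P.eval 0 := by
    rw [ev2_S2]; simp
  have i1 : ev2 (cderiv (pint (S1 P))) x x - ev2 (cderiv (pint (S1 P))) x 0
      = ∫ u in (0:ℝ)..x, P.eval u * (Polynomial.derivative P).eval (x - u) := by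
    rw [← ftc_ev2 (cderiv (pint (S1 P))) x 0 x]
    rw [derivative_cderiv, derivative_pint]
    simp only [ev2_cderiv_S1]
  have i2 : ev2 (cderiv (pint (S2 P))) x c - ev2 (cderiv (pint (S2 P))) x x
      = - ∫ u in x..c, P.eval u * (Polynomial.derivative P).eval (u - x) := by
    rw [← ftc_ev2 (cderiv (pint (S2 P))) x x c]
    rw [derivative_cderiv, derivative_pint]
    simp only [ev2_cderiv_S2]
    rw [intervalIntegral.integral_neg]
  rw [e1, e2]
  have : ev2 (cderiv (pint (S1 P))) x x - ev2 (cderiv (pint (S1 P))) x 0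
      + (ev2 (cderiv (pint (S2 P))) x c - ev2 (cderiv (pint (S2 P))) x x)
      = (∫ u in (0:ℝ)..x, P.eval u * (Polynomial.derivative P).eval (x - u))
        + - ∫ u in x..c, P.eval u * (Polynomial.derivative P).eval (u - x) := by
    rw [i1, i2]
  linarith [i1, i2]

end PhiAux

namespace PhiAux

open Set Filter intervalIntegral

lemma deriv_nonpos_of_antitoneOn (P : Polynomial ℝ) {c : ℝ} (hc : 0 < c)
    (hA : AntitoneOn (fun t => P.eval t) (Set.Icc 0 c)) :
    ∀ w ∈ Set.Icc (0:ℝ) c, (Polynomial.derivative P).eval w ≤ 0 := by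
  have hIco : ∀ w ∈ Set.Ico (0:ℝ) c, (Polynomial.derivative P).eval w ≤ 0 := by
    intro w hw
    have hder := (Polynomial.hasDerivAt P w)
    rw [hasDerivAt_iff_tendsto_slope] at hder
    have hle : Tendsto (slope (fun t => P.eval t) w) (nhdsWithin w (Set.Ioi w))
        (nhds ((Polynomial.derivative P).eval w)) :=
      hder.mono_left (nhdsWithin_mono w fun z hz => ne_of_gt hz)
    refine le_of_tendsto hle ?_
    filter_upwards [Ioo_mem_nhdsGT_of_mem (Set.mem_Ico.mpr ⟨le_refl w, hw.2⟩)] with z hz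
    rw [slope_def_field]
    apply div_nonpos_of_nonpos_of_nonneg
    · have : P.eval z ≤ P.eval w :=
        hA ⟨hw.1, hw.2.le⟩ ⟨le_trans hw.1 hz.1.le, hz.2.le⟩ hz.1.le
      linarith
    · linarith [hz.1]
  intro w hw
  have hclos : w ∈ closure (Set.Ico (0:ℝ) c) := by
    rw [closure_Ico (ne_of_lt hc)]; exact hw
  have hclosed : IsClosed {t : ℝ | (Polynomial.derivative P).eval t ≤ 0} :=
    isClosed_le (Polynomial.continuous _) continuous_const
  exact hclosed.closure_subset_iff.mpr hIco hclos

lemma gfun_deriv_bound (P : Polynomial ℝ) {c : ℝ} (hc : 0 < c)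
    (h0 : ∀ t ∈ Set.Icc (0:ℝ) c, 0 ≤ P.eval t)
    (hA : AntitoneOn (fun t => P.eval t) (Set.Icc 0 c))
    {x : ℝ} (hx : x ∈ Set.Icc (0:ℝ) c) :
    -(P.eval x * P.eval 0) +
        (∫ u in (0:ℝ)..x, P.eval u * (Polynomial.derivative P).eval (x - u)) -
        2 * (∫ u in x..c, P.eval u * (Polynomial.derivative P).eval (u - x)) ≤ 0 := by
  set d := Polynomial.derivative P with hd_def
  obtain ⟨hx0, hxc⟩ := hx
  have hd : ∀ w ∈ Set.Icc (0:ℝ) c, d.eval w ≤ 0 := deriv_nonpos_of_antitoneOn P hc hA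
  have hcont : ∀ q : Polynomial ℝ, Continuous fun t : ℝ => q.eval t := fun q =>
    Polynomial.continuous q
  -- Step A : rewrite first integral
  have hA1 : (∫ u in (0:ℝ)..x, P.eval u * d.eval (x - u))
      = ∫ w in (0:ℝ)..x, P.eval (x - w) * d.eval w := by
    have := intervalIntegral.integral_comp_sub_left (a := (0:ℝ)) (b := x)
      (fun w => P.eval (x - w) * d.eval w) x
    simp only [sub_sub_cancel, sub_zero, sub_self] at this
    exact this
  -- Step B+C : bound the first integral
  have hI1 : (∫ w in (0:ℝ)..x, P.eval (x - w) * d.eval w)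
      ≤ P.eval x * P.eval x - P.eval x * P.eval 0 := by
    have hmono : (∫ w in (0:ℝ)..x, P.eval (x - w) * d.eval w)
        ≤ ∫ w in (0:ℝ)..x, P.eval x * d.eval w := by
      apply intervalIntegral.integral_mono_on hx0
      · exact (((hcont P).comp (continuous_const.sub continuous_id)).mul
          (hcont d)).intervalIntegrable _ _
      · exact (continuous_const.mul (hcont d)).intervalIntegrable _ _
      · intro w hw
        have hxw : x - w ∈ Set.Icc (0:ℝ) c := ⟨by linarith [hw.2], by linarith [hw.1]⟩
        have h1 : P.eval x ≤ P.eval (x - w) := hA hxw ⟨hx0, hxc⟩ (by linarith [hw.1])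
        have h2 : d.eval w ≤ 0 := hd w ⟨hw.1, le_trans hw.2 hxc⟩
        exact mul_le_mul_of_nonpos_right h1 h2
    have hftc : (∫ w in (0:ℝ)..x, d.eval w) = P.eval x - P.eval 0 := by
      apply intervalIntegral.integral_eq_sub_of_hasDerivAt
      · exact fun u _ => Polynomial.hasDerivAt P u
      · exact (hcont d).intervalIntegrable _ _
    calc (∫ w in (0:ℝ)..x, P.eval (x - w) * d.eval w)
        ≤ ∫ w in (0:ℝ)..x, P.eval x * d.eval w := hmono
      _ = P.eval x * (P.eval x - P.eval 0) := by
          rw [intervalIntegral.integral_const_mul, hftc]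
      _ = P.eval x * P.eval x - P.eval x * P.eval 0 := by ring
  -- Step D : rewrite the second integral via integration by parts
  have hD : (∫ u in x..c, P.eval u * d.eval (u - x))
      = (P.eval c * P.eval (c - x) - P.eval x * P.eval 0)
        - ∫ u in x..c, d.eval u * P.eval (u - x) := by
    have hsum : (∫ u in x..c, (d.eval u * P.eval (u - x) + P.eval u * d.eval (u - x)))
        = P.eval c * P.eval (c - x) - P.eval x * P.eval 0 := by
      have := intervalIntegral.integral_eq_sub_of_hasDerivAt
        (f := fun u => P.eval u * P.eval (u - x))
        (f' := fun u => d.eval u * P.eval (u - x) + P.eval u * d.eval (u - x))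
        (a := x) (b := c) ?_ ?_
      · rw [this]; simp
      · intro u _
        have h1 := Polynomial.hasDerivAt P u
        have h2 : HasDerivAt (fun u : ℝ => P.eval (u - x)) (d.eval (u - x)) u := by
          have := (Polynomial.hasDerivAt P (u - x)).comp u ((hasDerivAt_id u).sub_const x)
          simpa [Function.comp_def] using this
        exact h1.mul h2
      · exact ((hcont d).mul ((hcont P).comp (continuous_id.sub continuous_const))
          |>.add ((hcont P).mul ((hcont d).comp
          (continuous_id.sub continuous_const)))).intervalIntegrable _ _
    have hsplit : (∫ u in x..c, (d.eval u * P.eval (u - x) + P.eval u * d.eval (u - x)))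
        = (∫ u in x..c, d.eval u * P.eval (u - x))
          + ∫ u in x..c, P.eval u * d.eval (u - x) := by
      apply intervalIntegral.integral_add
      · exact ((hcont d).mul ((hcont P).comp
          (continuous_id.sub continuous_const))).intervalIntegrable _ _
      · exact ((hcont P).mul ((hcont d).comp
          (continuous_id.sub continuous_const))).intervalIntegrable _ _
    rw [hsplit] at hsum
    linarith
  -- Step E+F : bound the remaining integral
  have hJ : (∫ u in x..c, d.eval u * P.eval (u - x))
      ≤ P.eval c * P.eval c / 2 - P.eval x * P.eval x / 2 := by
    have hmono : (∫ u in x..c, d.eval u * P.eval (u - x))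
        ≤ ∫ u in x..c, d.eval u * P.eval u := by
      apply intervalIntegral.integral_mono_on hxc
      · exact ((hcont d).mul ((hcont P).comp
          (continuous_id.sub continuous_const))).intervalIntegrable _ _
      · exact ((hcont d).mul (hcont P)).intervalIntegrable _ _
      · intro u hu
        have hu1 : u ∈ Set.Icc (0:ℝ) c := ⟨le_trans hx0 hu.1, hu.2⟩
        have hux : u - x ∈ Set.Icc (0:ℝ) c := ⟨by linarith [hu.1], by linarith [hu.2]⟩
        have h1 : P.eval u ≤ P.eval (u - x) := hA hux hu1 (by linarith)
        have h2 : d.eval u ≤ 0 := hd u hu1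
        exact mul_le_mul_of_nonpos_left h1 h2
    have hftc2 : (∫ u in x..c, 2 * (P.eval u * d.eval u))
        = P.eval c * P.eval c - P.eval x * P.eval x := by
      have := intervalIntegral.integral_eq_sub_of_hasDerivAt
        (f := fun u => P.eval u * P.eval u)
        (f' := fun u => 2 * (P.eval u * d.eval u)) (a := x) (b := c) ?_ ?_
      · exact this
      · intro u _
        have := (Polynomial.hasDerivAt P u).mul (Polynomial.hasDerivAt P u)
        refine this.congr_deriv ?_
        ring
      · exact (continuous_const.mul ((hcont P).mul (hcont d))).intervalIntegrable _ _
    have : (∫ u in x..c, d.eval u * P.eval u)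
        = (P.eval c * P.eval c - P.eval x * P.eval x) / 2 := by
      rw [← hftc2, intervalIntegral.integral_const_mul]
      have : (∫ u in x..c, d.eval u * P.eval u) = ∫ u in x..c, P.eval u * d.eval u := by
        congr 1; funext u; ring
      rw [this]; ring
    rw [this] at hmono
    linarith
  -- final combination
  have hfc : 0 ≤ P.eval c := h0 c ⟨hc.le, le_refl c⟩
  have hfcx : P.eval c * P.eval c ≤ P.eval c * P.eval (c - x) := by
    apply mul_le_mul_of_nonneg_left _ hfc
    exact hA ⟨by linarith, by linarith⟩ ⟨hc.le, le_refl c⟩ (by linarith)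
  rw [hA1, hD]
  nlinarith [hI1, hJ, hfcx]

lemma gfun_antitoneOn (P : Polynomial ℝ) {c : ℝ} (hc : 0 < c)
    (h0 : ∀ t ∈ Set.Icc (0:ℝ) c, 0 ≤ P.eval t)
    (hA : AntitoneOn (fun t => P.eval t) (Set.Icc 0 c)) :
    AntitoneOn (gfun P c) (Set.Icc 0 c) := by
  have hdiff : Differentiable ℝ (gfun P c) := fun x =>
    (gfun_hasDerivAt P c x).differentiableAt
  apply antitoneOn_of_deriv_nonpos (convex_Icc 0 c)
  · exact hdiff.continuous.continuousOn
  · exact hdiff.differentiableOn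
  · intro x hx
    rw [interior_Icc] at hx
    rw [(gfun_hasDerivAt P c x).deriv]
    exact gfun_deriv_bound P hc h0 hA ⟨hx.1.le, hx.2.le⟩

end PhiAux


open PhiAux in
/-- Each `φ_n` is nonnegative, continuous, polynomial and non-increasing on `[0, 2^{-n}]`. -/
theorem phi_properties (n : ℕ) (hn : 1 ≤ n) :
    (∀ x ∈ Set.Icc (0:ℝ) ((2:ℝ) ^ (-(n:ℤ))), 0 ≤ phi n x) ∧
      ContinuousOn (phi n) (Set.Icc (0:ℝ) ((2:ℝ) ^ (-(n:ℤ)))) ∧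
      (∃ P : Polynomial ℝ, ∀ x ∈ Set.Icc (0:ℝ) ((2:ℝ) ^ (-(n:ℤ))), phi n x = P.eval x) ∧
      AntitoneOn (phi n) (Set.Icc (0:ℝ) ((2:ℝ) ^ (-(n:ℤ)))) := by
  induction n, hn using Nat.le_induction with
  | base =>
      refine ⟨fun x _ => ?_, ?_, ⟨1, fun x _ => ?_⟩, fun a _ b _ _ => ?_⟩
      · show (0:ℝ) ≤ phi 1 x
        norm_num [phi]
      · show ContinuousOn (phi 1) _
        have h : phi 1 = fun _ => (1:ℝ) := rfl
        rw [h]; exact continuousOn_const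
      · simp [phi]
      · show phi 1 b ≤ phi 1 a
        simp [phi]
  | succ n hn IH =>
      obtain ⟨m, rfl⟩ : ∃ m, n = m + 1 := ⟨n - 1, (Nat.succ_pred_eq_of_pos hn).symm⟩
      set b : ℝ := (2:ℝ) ^ (-((m:ℤ) + 1)) with hb_def
      set c : ℝ := (2:ℝ) ^ (-((m:ℤ) + 2)) with hc_def
      have hcast1 : ((m + 1 + 1 : ℕ) : ℤ) = (m:ℤ) + 2 := by push_cast; ring
      have hcast2 : ((m + 1 : ℕ) : ℤ) = (m:ℤ) + 1 := by push_cast; ring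
      rw [hcast1]
      rw [hcast2] at IH
      obtain ⟨h0, hcont, ⟨P, hP⟩, hanti⟩ := IH
      have hc0 : (0:ℝ) < c := by positivity
      have hcb : c ≤ b := by
        apply zpow_le_zpow_right₀ (by norm_num : (1:ℝ) ≤ 2)
        omega
      have hsub : Set.Icc (0:ℝ) c ⊆ Set.Icc (0:ℝ) b := Set.Icc_subset_Icc le_rfl hcb
      have hP0 : ∀ t ∈ Set.Icc (0:ℝ) b, 0 ≤ P.eval t := fun t ht => hP t ht ▸ h0 t ht
      have hPanti : AntitoneOn (fun t => P.eval t) (Set.Icc (0:ℝ) b) := by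
        intro s hs t ht hst
        simp only
        rw [← hP s hs, ← hP t ht]
        exact hanti hs ht hst
      have hphi : ∀ x : ℝ, phi (m + 1 + 1) x =
          (∫ u in (0:ℝ)..x, phi (m + 1) u * phi (m + 1) (x - u)) +
            2 * ∫ u in x..c, phi (m + 1) u * phi (m + 1) (u - x) := fun x => rfl
      have hkey : ∀ x ∈ Set.Icc (0:ℝ) c, phi (m + 1 + 1) x = gfun P c x := by
        intro x hx
        rw [hphi, gfun]
        congr 1
        · apply intervalIntegral.integral_congr
          intro u hu
          rw [Set.uIcc_of_le hx.1] at hu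
          have h1 : u ∈ Set.Icc (0:ℝ) b := ⟨hu.1, le_trans (le_trans hu.2 hx.2) hcb⟩
          have h2 : x - u ∈ Set.Icc (0:ℝ) b :=
            ⟨by linarith [hu.2], by linarith [hu.1, hx.2, hcb]⟩
          simp only [hP u h1, hP _ h2]
        · congr 1
          apply intervalIntegral.integral_congr
          intro u hu
          rw [Set.uIcc_of_le hx.2] at hu
          have h1 : u ∈ Set.Icc (0:ℝ) b := ⟨le_trans hx.1 hu.1, le_trans hu.2 hcb⟩
          have h2 : u - x ∈ Set.Icc (0:ℝ) b :=
            ⟨by linarith [hu.1], by linarith [hu.2, hx.1, hcb]⟩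
          simp only [hP u h1, hP _ h2]
      obtain ⟨Q, hQ⟩ := gfun_poly P c
      have hganti : AntitoneOn (gfun P c) (Set.Icc 0 c) :=
        gfun_antitoneOn P hc0 (fun t ht => hP0 t (hsub ht)) (hPanti.mono hsub)
      refine ⟨?_, ?_, ⟨Q, fun x hx => (hkey x hx).trans (hQ x)⟩, ?_⟩
      · intro x hx
        rw [hkey x hx, gfun]
        have hi1 : 0 ≤ ∫ u in (0:ℝ)..x, P.eval u * P.eval (x - u) := by
          apply intervalIntegral.integral_nonneg hx.1
          intro u hu
          exact mul_nonneg
            (hP0 u ⟨hu.1, le_trans (le_trans hu.2 hx.2) hcb⟩)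
            (hP0 _ ⟨by linarith [hu.2], by linarith [hu.1, hx.2, hcb]⟩)
        have hi2 : 0 ≤ ∫ u in x..c, P.eval u * P.eval (u - x) := by
          apply intervalIntegral.integral_nonneg hx.2
          intro u hu
          exact mul_nonneg
            (hP0 u ⟨le_trans hx.1 hu.1, le_trans hu.2 hcb⟩)
            (hP0 _ ⟨by linarith [hu.1], by linarith [hu.2, hx.1, hcb]⟩)
        linarith
      · exact ((Polynomial.continuous Q).continuousOn).congr
          (fun x hx => (hkey x hx).trans (hQ x))
      · intro s hs t ht hst
        rw [hkey s hs, hkey t ht]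
        exact hganti hs ht hst
end
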